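/- Let G be a finitely generated group such that every group homomorphism from G to the additive group (ℝ,+) is trivial, and let ρ be an orientation-preserving action of G on the circle by homeomorphisms that preserves a Borel probability measure μ on S¹ (the pushforward of μ under ρ(g) equals μ for all g ∈ G). Then G has a periodic orbit: there exists a point p ∈ S¹ whose orbit {ρ(g)(p) : g ∈ G} is finite. In particular, there exists a finite-index normal subgroup K of G and a point q ∈ S¹ with ρ(k)(q) = q for all k ∈ K. -/

import Mathlib

open MeasureTheory

/-- The group of self-homeomorphisms of the circle `S¹ = ℝ/ℤ`,
with `f * g = f ∘ g`. -/
noncomputable instance : Group (UnitAddCircle ≃ₜ UnitAddCircle) where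
  mul f g := g.trans f
  one := Homeomorph.refl _
  inv := Homeomorph.symm
  mul_assoc _ _ _ := Homeomorph.ext fun _ => rfl
  one_mul _ := Homeomorph.ext fun _ => rfl
  mul_one _ := Homeomorph.ext fun _ => rfl
  inv_mul_cancel a := Homeomorph.ext a.symm_apply_apply

/-- `F : ℝ → ℝ` is a `C¹` lift of the circle homeomorphism `f`: it is `C¹` with
nowhere-vanishing derivative, commutes with the deck transformation up to sign,
and descends to `f` on `ℝ/ℤ`. -/
def IsC1Lift (f : UnitAddCircle ≃ₜ UnitAddCircle) (F : ℝ → ℝ) : Prop :=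
  ContDiff ℝ 1 F ∧ (∀ x : ℝ, deriv F x ≠ 0) ∧
    ((∀ x : ℝ, F (x + 1) = F x + 1) ∨ (∀ x : ℝ, F (x + 1) = F x - 1)) ∧
    ∀ x : ℝ, f (x : UnitAddCircle) = ((F x : ℝ) : UnitAddCircle)

/-- A `C¹` action of a group `Γ` on the circle: a homomorphism into the
self-homeomorphisms of the circle all of whose values admit `C¹` lifts. -/
def IsC1Action {Γ : Type*} [Group Γ] (ρ : Γ →* (UnitAddCircle ≃ₜ UnitAddCircle)) : Prop :=
  ∀ γ : Γ, ∃ F : ℝ → ℝ, IsC1Lift (ρ γ) F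

/-- `F : ℝ → ℝ` is an orientation-preserving `C¹` lift of the circle
homeomorphism `f`: it is `C¹` with everywhere positive derivative,
satisfies `F (x+1) = F x + 1` and descends to `f` on `ℝ/ℤ`. -/
def IsOPC1Lift (f : UnitAddCircle ≃ₜ UnitAddCircle) (F : ℝ → ℝ) : Prop :=
  ContDiff ℝ 1 F ∧ (∀ x : ℝ, 0 < deriv F x) ∧
    (∀ x : ℝ, F (x + 1) = F x + 1) ∧
    ∀ x : ℝ, f (x : UnitAddCircle) = ((F x : ℝ) : UnitAddCircle)

/-- `F : ℝ → ℝ` is an orientation-preserving (topological) lift of the circle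
homeomorphism `f`: continuous, strictly increasing, satisfies
`F (x+1) = F x + 1`, and descends to `f` on `ℝ/ℤ`. -/
def IsOPLift (f : UnitAddCircle ≃ₜ UnitAddCircle) (F : ℝ → ℝ) : Prop :=
  Continuous F ∧ StrictMono F ∧
    (∀ x : ℝ, F (x + 1) = F x + 1) ∧
    ∀ x : ℝ, f (x : UnitAddCircle) = ((F x : ℝ) : UnitAddCircle)

open scoped ENNReal DirectSum
open Set
namespace PO
noncomputable section

instance : Fact ((0:ℝ) < 1) := ⟨one_pos⟩

def rep (q : UnitAddCircle) : ℝ := (AddCircle.equivIoc 1 0 q : ℝ)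

lemma rep_mem (q : UnitAddCircle) : rep q ∈ Ioc (0:ℝ) 1 := by
  have := (AddCircle.equivIoc 1 0 q).2
  simpa [rep] using this

lemma coe_rep (q : UnitAddCircle) : ((rep q : ℝ) : UnitAddCircle) = q := by
  have : ((AddCircle.equivIoc 1 0).symm (AddCircle.equivIoc 1 0 q)) = q :=
    (AddCircle.equivIoc 1 0).symm_apply_apply q
  simpa [rep, AddCircle.equivIoc, QuotientAddGroup.equivIocMod] using this

lemma measurable_rep : Measurable rep :=
  measurable_subtype_coe.comp (AddCircle.measurableEquivIoc 1 0).measurable_toFun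

lemma coe_int_add (x : ℝ) (n : ℤ) : (((x + n : ℝ)) : UnitAddCircle) = (x : UnitAddCircle) := by
  have h : ((n : ℝ) : UnitAddCircle) = 0 := by
    rw [AddCircle.coe_eq_zero_iff]; exact ⟨n, by simp⟩
  rw [AddCircle.coe_add, h, add_zero]

lemma coe_eq_coe {x y : ℝ} (h : (x : UnitAddCircle) = y) : ∃ n : ℤ, y + n = x := by
  rw [QuotientAddGroup.eq_iff_sub_mem] at h
  obtain ⟨n, hn⟩ := h
  exact ⟨n, by simp at hn; linarith⟩

variable (μ : Measure UnitAddCircle)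

/-- the ℤ-periodic lift of μ to ℝ -/
def nu : Measure ℝ :=
  Measure.sum fun n : ℤ => Measure.map (· + (n:ℝ)) (Measure.map rep μ)

lemma nu_apply {A : Set ℝ} (hA : MeasurableSet A) :
    nu μ A = ∑' n : ℤ, μ {q | rep q + n ∈ A} := by
  rw [nu, Measure.sum_apply _ hA]
  congr 1
  ext n
  rw [Measure.map_apply (measurable_add_const _) hA,
    Measure.map_apply measurable_rep ((measurable_add_const _) hA)]
  rfl

lemma coe_image_eq_iUnion (A : Set ℝ) :
    ((fun x : ℝ => (x : UnitAddCircle)) '' A) = ⋃ n : ℤ, {q | rep q + n ∈ A} := by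
  ext q
  constructor
  · rintro ⟨x, hx, rfl⟩
    obtain ⟨n, hn⟩ := coe_eq_coe (coe_rep ((x:ℝ) : UnitAddCircle)).symm
    exact mem_iUnion.2 ⟨n, by simpa [hn] using hx⟩
  · rintro h
    obtain ⟨n, hn⟩ := mem_iUnion.1 h
    exact ⟨rep q + n, hn, by show ((rep q + n : ℝ) : UnitAddCircle) = q; rw [coe_int_add, coe_rep]⟩

lemma measure_coe_image_le {A : Set ℝ} (hA : MeasurableSet A) :
    μ ((fun x : ℝ => (x : UnitAddCircle)) '' A) ≤ nu μ A := by
  rw [coe_image_eq_iUnion, nu_apply μ hA]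
  exact measure_iUnion_le _

lemma nu_window {A : Set ℝ} (hA : MeasurableSet A) {s : ℝ} (hW : A ⊆ Ioc s (s+1)) :
    nu μ A = μ ((fun x : ℝ => (x : UnitAddCircle)) '' A) := by
  rw [coe_image_eq_iUnion, nu_apply μ hA]
  rw [measure_iUnion ?_ ?_]
  · intro n m hnm
    simp only [Function.onFun, disjoint_left]
    intro q hqn hqm
    have h1 := hW hqn; have h2 := hW hqm
    apply hnm
    have h3 : |(n : ℝ) - m| < 1 := by
      simp only [mem_Ioc] at h1 h2
      rw [abs_sub_lt_iff]; constructor <;> linarith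
    have h4 : ((n - m : ℤ) : ℝ) = (n:ℝ) - m := by push_cast; ring
    have h5 : |n - m| < 1 := by
      have := h3; rw [← h4, ← Int.cast_abs] at this
      exact_mod_cast this
    have := Int.abs_lt_one_iff.mp h5
    omega
  · intro n
    exact measurable_rep (measurable_add_const _ hA) -- {q | rep q + n ∈ A} meas

lemma coe_image_Ioc_unit (a : ℝ) :
    ((fun x : ℝ => (x : UnitAddCircle)) '' (Ioc a (a+1))) = univ := by
  refine eq_univ_of_forall fun q => ?_
  have h := (AddCircle.equivIoc 1 a q).2
  refine ⟨(AddCircle.equivIoc 1 a q : ℝ), by simpa using h, ?_⟩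
  have : ((AddCircle.equivIoc 1 a).symm (AddCircle.equivIoc 1 a q)) = q :=
    (AddCircle.equivIoc 1 a).symm_apply_apply q
  simpa [AddCircle.equivIoc, QuotientAddGroup.equivIocMod] using this

variable [IsProbabilityMeasure μ]

lemma nu_unit (a : ℝ) : nu μ (Ioc a (a+1)) = 1 := by
  rw [nu_window μ measurableSet_Ioc (le_refl _), coe_image_Ioc_unit, measure_univ]

lemma nu_add {a b c : ℝ} (hab : a ≤ b) (hbc : b ≤ c) :
    nu μ (Ioc a c) = nu μ (Ioc a b) + nu μ (Ioc b c) := by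
  rw [← Ioc_union_Ioc_eq_Ioc hab hbc,
    measure_union (Ioc_disjoint_Ioc_of_le le_rfl) measurableSet_Ioc]

lemma nu_Ioc_le (n : ℕ) : ∀ a b : ℝ, b ≤ a + n → nu μ (Ioc a b) ≤ n := by
  induction n with
  | zero => intro a b h; simp only [Nat.cast_zero, add_zero] at h
            simp [Ioc_eq_empty (not_lt.mpr h)]
  | succ n ih =>
    intro a b h
    rcases le_total b (a+1) with hb | hb
    · calc nu μ (Ioc a b) ≤ nu μ (Ioc a (a+1)) := measure_mono (Ioc_subset_Ioc_right hb)
        _ = 1 := nu_unit μ a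
        _ ≤ (n+1 : ℕ) := by simp
    · rw [nu_add μ (by linarith : a ≤ a+1) hb, nu_unit μ a]
      have := ih (a+1) b (by push_cast at h ⊢; linarith)
      calc 1 + nu μ (Ioc (a+1) b) ≤ 1 + (n:ℝ≥0∞) := by exact add_le_add_right this 1
        _ = ((n+1 : ℕ) : ℝ≥0∞) := by push_cast; ring

lemma nu_lt_top (a b : ℝ) : nu μ (Ioc a b) < ⊤ := by
  obtain ⟨n, hn⟩ := exists_nat_ge (b - a)
  exact lt_of_le_of_lt (nu_Ioc_le μ n a b (by linarith)) (by simp)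

lemma nu_ne_top (a b : ℝ) : nu μ (Ioc a b) ≠ ⊤ := (nu_lt_top μ a b).ne

/-- CDF-like function of nu -/
def Hf (x : ℝ) : ℝ := (nu μ (Ioc 0 x)).toReal - (nu μ (Ioc x 0)).toReal

lemma Hf_zero : Hf μ 0 = 0 := by simp [Hf]

lemma Hf_sub {a b : ℝ} (hab : a ≤ b) : Hf μ b - Hf μ a = (nu μ (Ioc a b)).toReal := by
  rcases le_total 0 a with h0 | h0
  · have h1 : Ioc b (0:ℝ) = ∅ := Ioc_eq_empty (by intro h; linarith)
    have h2 : Ioc a (0:ℝ) = ∅ := Ioc_eq_empty (by intro h; linarith)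
    rw [Hf, Hf, h1, h2]
    simp only [measure_empty, ENNReal.toReal_zero, sub_zero]
    rw [nu_add μ h0 hab, ENNReal.toReal_add (nu_ne_top _ _ _) (nu_ne_top _ _ _)]
    ring
  · rcases le_total b 0 with hb | hb
    · have h1 : Ioc (0:ℝ) a = ∅ := Ioc_eq_empty (by intro h; linarith)
      have h2 : Ioc (0:ℝ) b = ∅ := Ioc_eq_empty (by intro h; linarith)
      rw [Hf, Hf, h1, h2]
      simp only [measure_empty, ENNReal.toReal_zero, zero_sub]
      rw [nu_add μ hab hb, ENNReal.toReal_add (nu_ne_top _ _ _) (nu_ne_top _ _ _)]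
      ring
    · have h1 : Ioc b (0:ℝ) = ∅ := Ioc_eq_empty (by intro h; linarith)
      have h2 : Ioc (0:ℝ) a = ∅ := Ioc_eq_empty (by intro h; linarith)
      rw [Hf, Hf, h1, h2]
      simp only [measure_empty, ENNReal.toReal_zero, sub_zero, zero_sub]
      rw [nu_add μ h0 hb, ENNReal.toReal_add (nu_ne_top _ _ _) (nu_ne_top _ _ _)]
      ring

lemma Hf_mono : Monotone (Hf μ) := by
  intro a b hab
  have := Hf_sub μ hab
  have h2 : (0:ℝ) ≤ (nu μ (Ioc a b)).toReal := ENNReal.toReal_nonneg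
  linarith

lemma Hf_add_one (x : ℝ) : Hf μ (x + 1) = Hf μ x + 1 := by
  have := Hf_sub μ (by linarith : x ≤ x + 1)
  rw [nu_unit μ x] at this
  simp at this; linarith

lemma Hf_add_int (x : ℝ) (n : ℤ) : Hf μ (x + n) = Hf μ x + n := by
  induction n using Int.induction_on with
  | zero => simp
  | succ k ih => push_cast at ih ⊢
                 have := Hf_add_one μ (x + k)
                 rw [show x + (k + 1) = (x + k) + 1 by ring, this, ih]; ring
  | pred k ih => push_cast at ih ⊢
                 have h2 := Hf_add_one μ (x + (-(k:ℝ) - 1))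
                 rw [show x + (-(k:ℝ) - 1) + 1 = x + -(k:ℝ) by ring] at h2
                 linarith

lemma nu_eq_zero_of_Hf {a b : ℝ} (hab : a ≤ b) (h : Hf μ b = Hf μ a) :
    nu μ (Ioc a b) = 0 := by
  have := Hf_sub μ hab
  rw [h, sub_self] at this
  exact (ENNReal.toReal_eq_zero_iff _).mp this.symm |>.resolve_right (nu_ne_top μ a b)

lemma map_image {f : UnitAddCircle ≃ₜ UnitAddCircle}
    (hs : Measure.map ⇑f.symm μ = μ) (S : Set UnitAddCircle) : μ (f '' S) = μ S := by
  have h1 : f '' S = f.symm ⁻¹' S := f.image_eq_preimage_symm S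
  have h2 := (MeasurableEquiv.map_apply (f.symm.toMeasurableEquiv) (μ := μ) S).symm
  rw [show (⇑f.symm.toMeasurableEquiv : UnitAddCircle → UnitAddCircle) = ⇑f.symm from rfl] at h2
  rw [h1, h2, hs]


variable {f : UnitAddCircle ≃ₜ UnitAddCircle} {F : ℝ → ℝ}

lemma lift_image_Ioc (hF : IsOPLift f F) {a b : ℝ} (hab : a ≤ b) :
    F '' Ioc a b = Ioc (F a) (F b) := by
  apply subset_antisymm
  · rintro y ⟨x, hx, rfl⟩
    exact ⟨hF.2.1 hx.1, hF.2.1.monotone hx.2⟩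
  · exact intermediate_value_Ioc hab hF.1.continuousOn

lemma nu_F_window (hF : IsOPLift f F) (hs : Measure.map ⇑f.symm μ = μ)
    {a b : ℝ} (hab : a ≤ b) (hb1 : b ≤ a + 1) :
    nu μ (Ioc (F a) (F b)) = nu μ (Ioc a b) := by
  have hW2 : Ioc (F a) (F b) ⊆ Ioc (F a) (F a + 1) := by
    apply Ioc_subset_Ioc_right
    rw [← hF.2.2.1 a]
    exact hF.2.1.monotone hb1
  rw [nu_window μ measurableSet_Ioc hW2,
      nu_window μ measurableSet_Ioc (Ioc_subset_Ioc_right hb1)]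
  rw [← lift_image_Ioc hF hab, image_image]
  have hpt : ∀ x : ℝ, ((F x : ℝ) : UnitAddCircle) = f ((x : ℝ) : UnitAddCircle) := by
    intro x; rw [hF.2.2.2 x]
  simp_rw [hpt]
  rw [← image_image (fun q => f q) (fun x : ℝ => (x : UnitAddCircle))]
  exact map_image μ hs _

lemma nu_F_Ioc (hF : IsOPLift f F) (hs : Measure.map ⇑f.symm μ = μ) (n : ℕ) :
    ∀ a b : ℝ, a ≤ b → b ≤ a + n → nu μ (Ioc (F a) (F b)) = nu μ (Ioc a b) := by
  induction n with
  | zero => intro a b hab h; simp only [Nat.cast_zero, add_zero] at h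
            have : a = b := le_antisymm hab h
            subst this; simp
  | succ n ih =>
    intro a b hab h
    rcases le_total b (a + 1) with hb | hb
    · exact nu_F_window μ hF hs hab hb
    · have h1 : F a ≤ F (a+1) := hF.2.1.monotone (by linarith)
      have h2 : F (a+1) ≤ F b := hF.2.1.monotone hb
      rw [nu_add μ h1 h2, nu_add μ (by linarith : a ≤ a + 1) hb,
        nu_F_window μ hF hs (by linarith) (le_refl _),
        ih (a+1) b hb (by push_cast at h ⊢; linarith)]

lemma Hf_F_const (hF : IsOPLift f F) (hs : Measure.map ⇑f.symm μ = μ) (x y : ℝ) :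
    Hf μ (F y) - Hf μ (F x) = Hf μ y - Hf μ x := by
  have key : ∀ u v : ℝ, u ≤ v → Hf μ (F v) - Hf μ (F u) = Hf μ v - Hf μ u := by
    intro u v huv
    obtain ⟨n, hn⟩ := exists_nat_ge (v - u)
    rw [Hf_sub μ huv, Hf_sub μ (hF.2.1.monotone huv),
      nu_F_Ioc μ hF hs n u v huv (by linarith)]
  rcases le_total x y with h | h
  · exact key x y h
  · have := key y x h; linarith

lemma exists_dense_point : ∃ q : UnitAddCircle, ∀ U, IsOpen U → q ∈ U → μ U ≠ 0 := by
  by_contra h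
  push_neg at h
  choose U hUopen hUmem hU0 using h
  set S : Set (Set UnitAddCircle) := {V | IsOpen V ∧ μ V = 0} with hS
  obtain ⟨T, hTc, hTS, hT⟩ := TopologicalSpace.isOpen_sUnion_countable S (fun s hs => hs.1)
  have huniv : ⋃₀ S = univ := by
    apply eq_univ_of_forall
    intro q
    exact ⟨U q, ⟨hUopen q, hU0 q⟩, hUmem q⟩
  have : μ (⋃₀ T) = 0 := by
    rw [measure_sUnion_null_iff hTc]
    exact fun s hs => (hTS hs).2
  rw [hT, huniv, measure_univ] at this
  exact one_ne_zero this

lemma normalize {f : UnitAddCircle ≃ₜ UnitAddCircle} {F : ℝ → ℝ}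
    (hF : IsOPLift f F) (hs : Measure.map ⇑f.symm μ = μ) (m : ℤ) (hm : Hf μ (F 0) = m) :
    ∃ Fn : ℝ → ℝ, IsOPLift f Fn ∧ ∀ x, Hf μ (Fn x) = Hf μ x := by
  refine ⟨fun x => F x - m, ⟨hF.1.sub continuous_const, fun a b hab => by
      simpa using hF.2.1 hab, fun x => by simp [hF.2.2.1 x]; ring, fun x => ?_⟩, fun x => ?_⟩
  · rw [hF.2.2.2 x]
    have h0 : F x - (m:ℝ) + m = F x := by ring
    have h1 := coe_int_add (F x - m) m
    rw [h0] at h1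
    show ((F x : ℝ) : UnitAddCircle) = ((F x - (m:ℝ) : ℝ) : UnitAddCircle)
    exact h1
  · have h1 : Hf μ (F x - m) = Hf μ (F x) - m := by
      have := Hf_add_int μ (F x) (-m)
      push_cast at this
      rw [show F x + -(m:ℝ) = F x - m from by ring] at this
      rw [this]; ring
    have h2 := Hf_F_const μ hF hs 0 x
    rw [Hf_zero] at h2
    simp only [h1, hm]
    linarith

lemma fixed_point {f f' : UnitAddCircle ≃ₜ UnitAddCircle}
    (hf : Measure.map ⇑f.symm μ = μ) (hf' : Measure.map ⇑f'.symm μ = μ)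
    (hff' : ∀ z, f (f' z) = z)
    {F F' : ℝ → ℝ} (hF : IsOPLift f F) (hF' : IsOPLift f' F')
    (hcF : ∃ m : ℤ, Hf μ (F 0) = m) (hcF' : ∃ m : ℤ, Hf μ (F' 0) = m)
    {q : UnitAddCircle} (hq : ∀ U, IsOpen U → q ∈ U → μ U ≠ 0) :
    f q = q := by
  obtain ⟨m, hm⟩ := hcF
  obtain ⟨m', hm'⟩ := hcF'
  obtain ⟨Fn, hFn, hHFn⟩ := normalize μ hF hf m hm
  obtain ⟨Fn', hFn', hHFn'⟩ := normalize μ hF' hf' m' hm'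
  set x := rep q with hxdef
  have hx : ((x : ℝ) : UnitAddCircle) = q := coe_rep q
  set v := Fn x with hvdef
  set u := Fn' x with hudef
  have hHv : Hf μ v = Hf μ x := hHFn x
  have hHu : Hf μ u = Hf μ x := hHFn' x
  have hint : ∀ y : ℝ, Hf μ y = Hf μ x → ∀ n : ℤ, y = x + n → y = x := by
    intro y hy n hn
    have : Hf μ (x + n) = Hf μ x + n := Hf_add_int μ x n
    rw [← hn, hy] at this
    have : (n : ℝ) = 0 := by linarith
    have : n = 0 := by exact_mod_cast this
    rw [hn, this]; simp
  by_cases hvx : ∃ n : ℤ, v = x + n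
  · obtain ⟨n, hn⟩ := hvx
    have hvx2 : v = x := hint v hHv n hn
    rw [← hx, hFn.2.2.2 x, ← hvdef, hvx2, hx]
  · exfalso
    have hvne : v ≠ x := fun h => hvx ⟨0, by simp [h]⟩
    -- Fn u = x
    have hcoe : ((Fn u : ℝ) : UnitAddCircle) = ((x : ℝ) : UnitAddCircle) := by
      rw [← hFn.2.2.2 u, ← hFn'.2.2.2 x, hff']
    obtain ⟨j, hj⟩ := coe_eq_coe hcoe
    have hFnu : Fn u = x := by
      have h1 : Hf μ (Fn u) = Hf μ x := by rw [hHFn u, hHu]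
      exact hint (Fn u) h1 j (by linarith)
    have hune : u ≠ x := by
      intro h
      apply hvne
      calc v = Fn x := hvdef
        _ = Fn u := by rw [h]
        _ = x := hFnu
    -- straddle
    obtain ⟨a, b, hax, hxb, hHa, hHb⟩ :
        ∃ a b : ℝ, a < x ∧ x < b ∧ Hf μ a = Hf μ x ∧ Hf μ b = Hf μ x := by
      rcases lt_or_gt_of_ne hune with h | h
      · refine ⟨u, v, h, ?_, hHu, hHv⟩
        have := hFn.2.1 h
        rw [hFnu] at this; exact this
      · refine ⟨v, u, ?_, h, hHv, hHu⟩
        have := hFn.2.1 h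
        rw [hFnu] at this; exact this
    have hnl : nu μ (Ioc a x) = 0 := nu_eq_zero_of_Hf μ hax.le (by linarith)
    have hnr : nu μ (Ioc x b) = 0 := nu_eq_zero_of_Hf μ hxb.le hHb
    have hb1 : b < x + 1 := by
      by_contra hcon
      push_neg at hcon
      have h1 : (1:ℝ≥0∞) ≤ nu μ (Ioc x b) := by
        rw [← nu_unit μ x]
        exact measure_mono (Ioc_subset_Ioc_right hcon)
      rw [hnr] at h1; simp at h1
    have ha1 : x - 1 < a := by
      by_contra hcon
      push_neg at hcon
      have h1 : (1:ℝ≥0∞) ≤ nu μ (Ioc a x) := by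
        rw [← nu_unit μ (x-1)]
        have : Ioc (x-1) (x-1+1) ⊆ Ioc a x := by
          rw [show x - 1 + 1 = x from by ring]
          exact Ioc_subset_Ioc_left hcon
        exact measure_mono this
      rw [hnl] at h1; simp at h1
    set U : Set UnitAddCircle := (fun t : ℝ => (t : UnitAddCircle)) '' Ioo a b with hUdef
    have hUopen : IsOpen U := QuotientAddGroup.isOpenMap_coe _ isOpen_Ioo
    have hqU : q ∈ U := ⟨x, ⟨hax, hxb⟩, hx⟩
    have hU0 : μ U = 0 := by
      have hsub : U ⊆ (fun t : ℝ => (t : UnitAddCircle)) '' Ioc a x ∪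
          (fun t : ℝ => (t : UnitAddCircle)) '' Ioc x b := by
        rintro z ⟨t, ht, rfl⟩
        rcases le_or_gt t x with h | h
        · exact Or.inl ⟨t, ⟨ht.1, h⟩, rfl⟩
        · exact Or.inr ⟨t, ⟨h, ht.2.le⟩, rfl⟩
      have hle : μ U ≤ 0 := by
        calc μ U ≤ μ ((fun t : ℝ => (t : UnitAddCircle)) '' Ioc a x ∪
            (fun t : ℝ => (t : UnitAddCircle)) '' Ioc x b) := measure_mono hsub
          _ ≤ μ ((fun t : ℝ => (t : UnitAddCircle)) '' Ioc a x) +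
              μ ((fun t : ℝ => (t : UnitAddCircle)) '' Ioc x b) := measure_union_le _ _
          _ ≤ nu μ (Ioc a x) + nu μ (Ioc x b) :=
              add_le_add (measure_coe_image_le μ measurableSet_Ioc)
                (measure_coe_image_le μ measurableSet_Ioc)
          _ = 0 := by rw [hnl, hnr, add_zero]
      exact nonpos_iff_eq_zero.mp hle
    exact hq U hUopen hqU hU0

lemma finite_of_fg_trivial_hom (A : Type*) [CommGroup A] [Group.FG A]
    (h : ∀ ψ : A →* Multiplicative ℝ, ψ = 1) : Finite A := by
  haveI : AddGroup.FG (Additive A) := GroupFG.iff_add_fg.mp ‹Group.FG A›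
  obtain ⟨n, ι, fι, p, hp, e, ⟨eq⟩⟩ :=
    AddCommGroup.equiv_free_prod_directSum_zmod (Additive A)
  rcases Nat.eq_zero_or_pos n with hn | hn
  · subst hn
    haveI : ∀ i, NeZero (p i ^ e i) := fun i => ⟨pow_ne_zero _ (hp i).ne_zero⟩
    haveI : ∀ i, Finite (ZMod (p i ^ e i)) := fun i => inferInstance
    haveI : Finite (⨁ i : ι, ZMod (p i ^ e i)) :=
      Finite.of_equiv _ (DFinsupp.equivFunOnFintype).symm
    haveI : IsEmpty (Fin 0) := inferInstance
    haveI : Finite (Fin 0 →₀ ℤ) := by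
      haveI : Subsingleton (Fin 0 →₀ ℤ) := ⟨fun f g => Finsupp.ext (fun i => i.elim0)⟩
      infer_instance
    exact Finite.of_equiv _ eq.toEquiv.symm
  · exfalso
    set i0 : Fin n := ⟨0, hn⟩ with hi0
    set ψ1 : Additive A →+ ℝ :=
      ((Int.castAddHom ℝ).comp ((Finsupp.applyAddHom i0).comp
        (AddMonoidHom.fst (Fin n →₀ ℤ) (⨁ i : ι, ZMod (p i ^ e i))))).comp
        eq.toAddMonoidHom with hψ1
    set a0 : Additive A := eq.symm (Finsupp.single i0 1, 0) with ha0
    have hval : ψ1 a0 = 1 := by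
      simp [hψ1, ha0]
    set ψ : A →* Multiplicative ℝ :=
      MonoidHom.mk' (fun a => Multiplicative.ofAdd (ψ1 (Additive.ofMul a)))
        (fun a b => by
          show Multiplicative.ofAdd (ψ1 (Additive.ofMul (a*b))) =
            Multiplicative.ofAdd (ψ1 (Additive.ofMul a)) * Multiplicative.ofAdd (ψ1 (Additive.ofMul b))
          have h0 : Additive.ofMul (a*b) = Additive.ofMul a + Additive.ofMul b := rfl
          rw [h0, map_add, ofAdd_add]) with hψ
    have := h ψ
    have h2 : ψ (Additive.toMul a0) = 1 := by rw [this]; rfl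
    have h3 : ψ1 a0 = 0 := by
      have := h2
      simp only [hψ, MonoidHom.mk'_apply] at this
      exact_mod_cast this
    rw [hval] at h3
    exact one_ne_zero h3

end
end PO

/-- **Corollary.** A finitely generated group with `H¹(G,ℝ) = 0` (every
homomorphism to `(ℝ,+)` is trivial) acting on the circle by
orientation-preserving homeomorphisms and preserving a Borel probability
measure has a periodic orbit; in particular, a finite-index normal subgroup
acts with a global fixed point. -/

theorem periodic_orbit_of_trivial_cohomology_measure_preserving
    {G : Type*} [Group G] (hfg : Group.FG G)
    (hcoh : ∀ φ : G →* Multiplicative ℝ, φ = 1)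
    (ρ : G →* (UnitAddCircle ≃ₜ UnitAddCircle))
    (hρ : ∀ g : G, ∃ F : ℝ → ℝ, IsOPLift (ρ g) F)
    (μ : Measure UnitAddCircle) [IsProbabilityMeasure μ]
    (hinv : ∀ g : G, Measure.map (ρ g) μ = μ) :
    (∃ p : UnitAddCircle, (Set.range fun g : G => ρ g p).Finite) ∧
      ∃ K : Subgroup G, K.Normal ∧ K.FiniteIndex ∧
        ∃ q : UnitAddCircle, ∀ k ∈ K, ρ k q = q := by
  classical
  haveI := hfg
  set Fg : G → ℝ → ℝ := fun g => Classical.choose (hρ g) with hFgdef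
  have hFg : ∀ g : G, IsOPLift (ρ g) (Fg g) := fun g => Classical.choose_spec (hρ g)
  have hmulpt : ∀ (g h : G) (z : UnitAddCircle), ρ (g * h) z = ρ g (ρ h z) := by
    intro g h z
    rw [map_mul ρ g h]
    rfl
  have hinv' : ∀ g : G, Measure.map ⇑(ρ g).symm μ = μ := by
    intro g
    have h1 : (ρ g).symm = ρ g⁻¹ := by rw [map_inv ρ g]; rfl
    rw [h1]; exact hinv g⁻¹
  set c : G → ℝ := fun g => PO.Hf μ (Fg g 0) with hcdef
  have hmapmul : ∀ g h : G,
      Multiplicative.ofAdd ((c (g * h) : ℝ) : UnitAddCircle) =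
      Multiplicative.ofAdd ((c g : ℝ) : UnitAddCircle) *
      Multiplicative.ofAdd ((c h : ℝ) : UnitAddCircle) := by
    intro g h
    have hl : ((Fg g (Fg h 0) : ℝ) : UnitAddCircle) = ((Fg (g*h) 0 : ℝ) : UnitAddCircle) := by
      rw [← (hFg (g*h)).2.2.2 0, ← (hFg g).2.2.2 (Fg h 0), ← (hFg h).2.2.2 0, ← hmulpt]
    obtain ⟨j, hj⟩ := PO.coe_eq_coe hl
    have h1 : PO.Hf μ (Fg g (Fg h 0) + j) = PO.Hf μ (Fg g (Fg h 0)) + j := PO.Hf_add_int μ _ j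
    have h2 : PO.Hf μ (Fg g (Fg h 0)) - PO.Hf μ (Fg g 0) = PO.Hf μ (Fg h 0) - PO.Hf μ 0 :=
      PO.Hf_F_const μ (hFg g) (hinv' g) 0 (Fg h 0)
    rw [PO.Hf_zero] at h2
    have h3 : PO.Hf μ (Fg g (Fg h 0)) = PO.Hf μ (Fg (g*h) 0) + j := by
      rw [← hj]; exact PO.Hf_add_int μ _ j
    have e1 : c (g*h) = c g + c h + ((-j : ℤ) : ℝ) := by
      rw [hcdef]
      simp only
      push_cast
      linarith
    have e2 : ((c (g*h) : ℝ) : UnitAddCircle) = ((c g + c h : ℝ) : UnitAddCircle) := by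
      rw [e1]; exact PO.coe_int_add (c g + c h) (-j)
    rw [e2, AddCircle.coe_add, ofAdd_add]
  set φ : G →* Multiplicative UnitAddCircle :=
    MonoidHom.mk' (fun g => Multiplicative.ofAdd ((c g : ℝ) : UnitAddCircle)) hmapmul with hφdef
  haveI hfin : Finite φ.range := by
    apply PO.finite_of_fg_trivial_hom
    intro ψ
    have hψ1 : ψ.comp φ.rangeRestrict = 1 := hcoh _
    ext a
    obtain ⟨g, rfl⟩ := φ.rangeRestrict_surjective a
    have : (ψ.comp φ.rangeRestrict) g = 1 := by rw [hψ1]; rfl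
    exact this
  haveI hqfin : Finite (G ⧸ φ.ker) :=
    Finite.of_equiv _ (QuotientGroup.quotientKerEquivRange φ).symm.toEquiv
  obtain ⟨q, hq⟩ := PO.exists_dense_point μ
  have hker : ∀ k', k' ∈ φ.ker → ∃ m : ℤ, PO.Hf μ (Fg k' 0) = m := by
    intro k' hk'
    rw [MonoidHom.mem_ker] at hk'
    have h0 : ((c k' : ℝ) : UnitAddCircle) = 0 := by
      have : Multiplicative.toAdd (φ k') = Multiplicative.toAdd (1 : Multiplicative UnitAddCircle) := by
        rw [hk']
      simpa [hφdef] using this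
    rw [AddCircle.coe_eq_zero_iff] at h0
    obtain ⟨m, hm⟩ := h0
    refine ⟨m, ?_⟩
    have : (m : ℝ) = c k' := by simpa using hm
    rw [hcdef] at this
    simp only at this
    exact this.symm
  have hfix : ∀ k ∈ φ.ker, ρ k q = q := by
    intro k hk
    have hff : ∀ z : UnitAddCircle, ρ k (ρ k⁻¹ z) = z := by
      intro z
      rw [← hmulpt, mul_inv_cancel, map_one]
      rfl
    exact PO.fixed_point μ (hinv' k) (hinv' k⁻¹) hff (hFg k) (hFg k⁻¹)
      (hker k hk) (hker k⁻¹ (inv_mem hk)) hq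
  refine ⟨⟨q, ?_⟩, φ.ker, inferInstance, @Subgroup.finiteIndex_of_finite_quotient _ _ φ.ker hqfin, q, hfix⟩
  have hresp : ∀ a b : G, (QuotientGroup.leftRel φ.ker) a b → ρ a q = ρ b q := by
    intro a b hab
    rw [QuotientGroup.leftRel_apply] at hab
    have : ρ b q = ρ a (ρ (a⁻¹ * b) q) := by rw [← hmulpt, mul_inv_cancel_left]
    rw [this, hfix _ hab]
  have hsub : (Set.range fun g : G => ρ g q) ⊆
      Set.range (fun x : G ⧸ φ.ker => Quotient.liftOn' x (fun g => ρ g q)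
        (fun a b h => hresp a b h)) := by
    rintro z ⟨g, rfl⟩
    exact ⟨QuotientGroup.mk g, rfl⟩
  exact (Set.finite_range _).subset hsub
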